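/- Let ψ₀, ψ₁ be an orthonormal basis of ℂ², let 0 ≤ p < 1/2, and let σ = p|ψ₀⟩⟨ψ₀| + (1−p)|ψ₁⟩⟨ψ₁|. Let W be a 2×2 Hermitian matrix with Tr W = 0, and set w = Tr[Wσ] and β = ⟨ψ₀|W|ψ₁⟩. Then Tr[W²σ] − w² = 4p(1−p) w² / (1−2p)² + |β|². -/

import Mathlib

open Matrix

/-- For the control-marginal state `σ = p|ψ₀⟩⟨ψ₀| + (1-p)|ψ₁⟩⟨ψ₁|` of a qubit
(`0 ≤ p < 1/2`) and a traceless Hermitian work operator `W`, with `w = Tr[Wσ]` and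
`β = ⟨ψ₀|W|ψ₁⟩`, the variance satisfies
`Tr[W²σ] - w² = 4p(1-p) w² / (1-2p)² + |β|²`. -/
theorem stmt_9 (ψ : Fin 2 → Fin 2 → ℂ)
    (horth : ∀ i j, star (ψ i) ⬝ᵥ ψ j = if i = j then (1 : ℂ) else 0)
    (p : ℝ) (hp0 : 0 ≤ p) (hp : p < 1 / 2)
    (W : Matrix (Fin 2) (Fin 2) ℂ) (hW : W.IsHermitian) (hWtr : W.trace = 0)
    (σ : Matrix (Fin 2) (Fin 2) ℂ)
    (hσ : σ = (p : ℂ) • vecMulVec (ψ 0) (star (ψ 0))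
        + ((1 - p : ℝ) : ℂ) • vecMulVec (ψ 1) (star (ψ 1))) :
    (W ^ 2 * σ).trace - (W * σ).trace ^ 2
      = ((4 * p * (1 - p) / (1 - 2 * p) ^ 2 : ℝ) : ℂ) * (W * σ).trace ^ 2
        + (‖star (ψ 0) ⬝ᵥ (W *ᵥ ψ 1)‖ ^ 2 : ℂ) := by
  -- unitarity of the basis matrix
  have hU : Matrix.of ψ * (Matrix.of ψ)ᴴ = 1 := by
    ext i j
    have h := horth j i
    simp only [dotProduct, Pi.star_apply] at h
    simp only [Matrix.mul_apply, Matrix.conjTranspose_apply, Matrix.of_apply,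
      Matrix.one_apply]
    have h2 : ∑ x : Fin 2, ψ i x * star (ψ j x) = ∑ x : Fin 2, star (ψ j x) * ψ i x :=
      Finset.sum_congr rfl fun k _ => mul_comm _ _
    rw [h2, h]
    simp [eq_comm]
  have hcomp : (Matrix.of ψ)ᴴ * Matrix.of ψ = 1 := mul_eq_one_comm.mp hU
  -- completeness relation, entrywise
  have e : ∀ k l : Fin 2, star (ψ 0 k) * ψ 0 l + star (ψ 1 k) * ψ 1 l
      = if k = l then (1 : ℂ) else 0 := by
    intro k l
    have h := congrFun (congrFun hcomp k) l
    simpa [Matrix.mul_apply, Matrix.conjTranspose_apply, Matrix.one_apply,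
      Fin.sum_univ_two] using h
  -- completeness as a matrix identity
  have hone : vecMulVec (ψ 0) (star (ψ 0)) + vecMulVec (ψ 1) (star (ψ 1))
      = (1 : Matrix (Fin 2) (Fin 2) ℂ) := by
    ext k l
    have h := e l k
    by_cases hkl : k = l
    · subst hkl
      rw [if_pos rfl] at h
      simp only [Matrix.add_apply, vecMulVec_apply, Matrix.one_apply_eq, Pi.star_apply]
      linear_combination h
    · rw [if_neg (fun hh => hkl hh.symm)] at h
      simp only [Matrix.add_apply, vecMulVec_apply, Matrix.one_apply_ne hkl, Pi.star_apply]
      linear_combination h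
  have hvm : ∀ (v w x : Fin 2 → ℂ), vecMulVec v w *ᵥ x = (w ⬝ᵥ x) • v := by
    intro v w x
    funext k
    simp only [mulVec, vecMulVec_apply, dotProduct, Fin.sum_univ_two, Pi.smul_apply,
      smul_eq_mul]
    ring
  -- expansion of any vector in the basis
  have hexp : ∀ x : Fin 2 → ℂ,
      (star (ψ 0) ⬝ᵥ x) • ψ 0 + (star (ψ 1) ⬝ᵥ x) • ψ 1 = x := by
    intro x
    calc (star (ψ 0) ⬝ᵥ x) • ψ 0 + (star (ψ 1) ⬝ᵥ x) • ψ 1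
        = vecMulVec (ψ 0) (star (ψ 0)) *ᵥ x + vecMulVec (ψ 1) (star (ψ 1)) *ᵥ x := by
          rw [hvm, hvm]
      _ = x := by rw [← add_mulVec, hone, one_mulVec]
  set a := star (ψ 0) ⬝ᵥ (W *ᵥ ψ 0) with ha_def
  set b := star (ψ 0) ⬝ᵥ (W *ᵥ ψ 1) with hb_def
  set c := star (ψ 1) ⬝ᵥ (W *ᵥ ψ 0) with hc_def
  set d := star (ψ 1) ⬝ᵥ (W *ᵥ ψ 1) with hd_def
  have hW0 := hexp (W *ᵥ ψ 0)
  have hW1 := hexp (W *ᵥ ψ 1)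
  -- hermiticity entrywise
  have hWe : ∀ k l, starRingEnd ℂ (W k l) = W l k := by
    intro k l
    have h := congrFun (congrFun hW.symm l) k
    simpa [Matrix.conjTranspose_apply] using h.symm
  -- a + d = trace W = 0
  have e00 : star (ψ 0 0) * ψ 0 0 + star (ψ 1 0) * ψ 1 0 = 1 := by simpa using e 0 0
  have e01 : star (ψ 0 0) * ψ 0 1 + star (ψ 1 0) * ψ 1 1 = 0 := by simpa using e 0 1
  have e10 : star (ψ 0 1) * ψ 0 0 + star (ψ 1 1) * ψ 1 0 = 0 := by simpa using e 1 0
  have e11 : star (ψ 0 1) * ψ 0 1 + star (ψ 1 1) * ψ 1 1 = 1 := by simpa using e 1 1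
  have had : a + d = 0 := by
    rw [← hWtr, Matrix.trace_fin_two, ha_def, hd_def]
    simp only [dotProduct, mulVec, Fin.sum_univ_two, Pi.star_apply]
    linear_combination W 0 0 * e00 + W 0 1 * e01 + W 1 0 * e10 + W 1 1 * e11
  -- c = conj b
  have hcb : c = starRingEnd ℂ b := by
    rw [hb_def, hc_def]
    simp only [dotProduct, mulVec, Fin.sum_univ_two, Pi.star_apply, Complex.star_def,
      map_add, _root_.map_mul, Complex.conj_conj, hWe]
    ring
  -- a is real
  have haa : starRingEnd ℂ a = a := by
    rw [ha_def]
    simp only [dotProduct, mulVec, Fin.sum_univ_two, Pi.star_apply, Complex.star_def,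
      map_add, _root_.map_mul, Complex.conj_conj, hWe]
    ring
  -- trace of M * σ
  have expand : ∀ M : Matrix (Fin 2) (Fin 2) ℂ, (M * σ).trace
      = (p : ℂ) * (star (ψ 0) ⬝ᵥ (M *ᵥ ψ 0))
        + ((1 - p : ℝ) : ℂ) * (star (ψ 1) ⬝ᵥ (M *ᵥ ψ 1)) := by
    intro M
    rw [hσ]
    simp only [Matrix.mul_add, Matrix.mul_smul, Matrix.trace_add, Matrix.trace_smul,
      Matrix.trace_fin_two, Matrix.mul_apply, vecMulVec_apply, dotProduct, mulVec,
      Fin.sum_univ_two, Pi.star_apply, smul_eq_mul]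
    ring
  have ht1 : (W * σ).trace = (p : ℂ) * a + ((1 - p : ℝ) : ℂ) * d := expand W
  have ht2 : (W ^ 2 * σ).trace
      = (p : ℂ) * (a * a + c * b) + ((1 - p : ℝ) : ℂ) * (b * c + d * d) := by
    have h0 : W ^ 2 *ᵥ ψ 0 = a • (W *ᵥ ψ 0) + c • (W *ᵥ ψ 1) := by
      rw [pow_two, ← mulVec_mulVec]
      conv_lhs => rw [← hW0]
      rw [mulVec_add, mulVec_smul, mulVec_smul]
    have h1 : W ^ 2 *ᵥ ψ 1 = b • (W *ᵥ ψ 0) + d • (W *ᵥ ψ 1) := by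
      rw [pow_two, ← mulVec_mulVec]
      conv_lhs => rw [← hW1]
      rw [mulVec_add, mulVec_smul, mulVec_smul]
    have k0 : star (ψ 0) ⬝ᵥ (W ^ 2 *ᵥ ψ 0) = a * a + c * b := by
      rw [h0, dotProduct_add, dotProduct_smul, dotProduct_smul, ← ha_def, ← hb_def,
        smul_eq_mul, smul_eq_mul]
    have k1 : star (ψ 1) ⬝ᵥ (W ^ 2 *ᵥ ψ 1) = b * c + d * d := by
      rw [h1, dotProduct_add, dotProduct_smul, dotProduct_smul, ← hc_def, ← hd_def,
        smul_eq_mul, smul_eq_mul]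
    rw [expand, k0, k1]
  -- reduce to a real identity
  obtain ⟨ar, har⟩ : ∃ ar : ℝ, a = (ar : ℂ) := ⟨a.re, (Complex.conj_eq_iff_re.mp haa).symm⟩
  have hd' : d = -a := by linear_combination had
  have hbb : starRingEnd ℂ b * b = ((‖b‖ ^ 2 : ℝ) : ℂ) := by
    rw [mul_comm, Complex.mul_conj]
    norm_cast
    rw [Complex.normSq_eq_norm_sq]
  have hbb' : b * starRingEnd ℂ b = ((‖b‖ ^ 2 : ℝ) : ℂ) := by
    rw [Complex.mul_conj]
    norm_cast
    rw [Complex.normSq_eq_norm_sq]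
  rw [ht1, ht2, hd', hcb, hbb, hbb', har]
  have h2p : ((1 : ℂ) - 2 * (p : ℂ)) ≠ 0 := by
    intro h
    have : (1 : ℝ) - 2 * p = 0 := by exact_mod_cast congrArg Complex.re h
    linarith
  push_cast
  field_simp
  have h2q : ((1 : ℂ) - (p : ℂ) * 2) ^ 2 ≠ 0 := pow_ne_zero 2 (by rw [mul_comm]; exact h2p)
  rw [div_add' _ _ _ h2q, eq_div_iff h2q]
  ring
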